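/- The symmetric group S_n is partitioned into n classes by the VT-syndrome of the inversion vector: for each a ∈ {0,...,n-1}, the set C_a = { σ ∈ S_n : sum_{i=1}^{n-1} i·inv(σ)_i ≡ a (mod n) } has cardinality (n-1)!. -/

import Mathlib

/-- The VT-syndrome of the inversion vector of a word `σ`:
`∑_{i=1}^{len-1} i · [σ_i > σ_{i+1}]`. -/
def vtSyndrome (σ : List ℕ) : ℕ :=
  ∑ i ∈ Finset.range (σ.length - 1), (i + 1) * (if σ.getD (i + 1) 0 < σ.getD i 0 then 1 else 0)

namespace VTaux

def f (n v : ℕ) : ℕ := v % n + 1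
def g (n v : ℕ) : ℕ := (v + n - 2) % n + 1

lemma f_lt (n v : ℕ) (h2 : v < n) : f n v = v + 1 := by
  simp [f, Nat.mod_eq_of_lt h2]

lemma f_n (n : ℕ) : f n n = 1 := by simp [f]

lemma g_one (n : ℕ) (hn : 1 ≤ n) : g n 1 = n := by
  have h : 1 + n - 2 = n - 1 := by omega
  rw [g, h, Nat.mod_eq_of_lt (by omega)]
  omega

lemma g_ge (n v : ℕ) (h1 : 2 ≤ v) (h2 : v ≤ n) : g n v = v - 1 := by
  have h : v + n - 2 = (v - 2) + n := by omega
  rw [g, h, Nat.add_mod_right, Nat.mod_eq_of_lt (by omega)]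
  omega

lemma gf (n v : ℕ) (hn : 1 ≤ n) (h1 : 1 ≤ v) (h2 : v ≤ n) : g n (f n v) = v := by
  by_cases hv : v = n
  · rw [hv, f_n, g_one n hn]
  · rw [f_lt n v (by omega), g_ge n (v+1) (by omega) (by omega)]
    omega

lemma fg (n v : ℕ) (hn : 1 ≤ n) (h1 : 1 ≤ v) (h2 : v ≤ n) : f n (g n v) = v := by
  by_cases hv : v = 1
  · rw [hv, g_one n hn, f_n]
  · rw [g_ge n v (by omega) h2, f_lt n (v-1) (by omega)]
    omega

end VTaux

namespace VTaux
open List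

lemma mem_range'_iff {n v : ℕ} : v ∈ range' 1 n ↔ 1 ≤ v ∧ v < 1 + n := by
  rw [List.mem_range']
  constructor
  · rintro ⟨i, hi, rfl⟩; omega
  · rintro ⟨h1, h2⟩; exact ⟨v - 1, by omega, by omega⟩

lemma range'_eq_concat (m : ℕ) : range' 1 (m + 1) = range' 1 m ++ [m + 1] := by
  have := List.range'_concat (step := 1) (s := 1) (n := m)
  simpa [Nat.add_comm] using this

lemma range'_shift (m : ℕ) : (range' 1 m).map (1 + ·) = range' 2 m :=
  List.map_add_range' (a := 1) 1 m 1

lemma map_f_perm (n : ℕ) (hn : 1 ≤ n) : (range' 1 n).map (f n) ~ range' 1 n := by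
  obtain ⟨m, rfl⟩ : ∃ m, n = m + 1 := ⟨n - 1, by omega⟩
  have h2 : (range' 1 m).map (f (m + 1)) = range' 2 m := by
    rw [← range'_shift]
    apply map_congr_left
    intro v hv
    rw [mem_range'_iff] at hv
    rw [f_lt (m + 1) v (by omega)]
    omega
  have h3 : range' 1 (m + 1) = 1 :: range' 2 m := by rw [List.range'_succ]
  conv_lhs => rw [range'_eq_concat]
  simp only [List.map_append, h2, List.map_cons, List.map_nil, f_n]
  conv_rhs => rw [h3]
  exact List.perm_append_singleton _ _

lemma map_g_perm (n : ℕ) (hn : 1 ≤ n) : (range' 1 n).map (g n) ~ range' 1 n := by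
  obtain ⟨m, rfl⟩ : ∃ m, n = m + 1 := ⟨n - 1, by omega⟩
  have h2 : (range' 2 m).map (g (m + 1)) = range' 1 m := by
    rw [← range'_shift, List.map_map]
    have : (range' 1 m).map (g (m + 1) ∘ (1 + ·)) = (range' 1 m).map id := by
      apply map_congr_left
      intro v hv
      rw [mem_range'_iff] at hv
      simp only [Function.comp_apply, id_eq]
      rw [show 1 + v = v + 1 by omega, g_ge (m + 1) (v + 1) (by omega) (by omega)]
      omega
    rw [this, List.map_id]
  have h3 : range' 1 (m + 1) = 1 :: range' 2 m := by rw [List.range'_succ]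
  conv_lhs => rw [h3]
  simp only [List.map_cons, h2, g_one (m + 1) (by omega)]
  rw [range'_eq_concat]
  exact (List.perm_append_singleton _ _).symm

end VTaux

namespace VTaux
open List

lemma syndrome_shift (n : ℕ) (hn : 1 ≤ n) (σ : List ℕ) (h : σ.Perm (range' 1 n)) :
    vtSyndrome (σ.map (f n)) % n = (vtSyndrome σ + (n - 1)) % n := by
  have hlen : σ.length = n := by simpa using h.length_eq
  have hnd : σ.Nodup := h.nodup_iff.mpr (List.nodup_range' (s := 1) (n := n))
  have hmemn : n ∈ σ := h.mem_iff.mpr (mem_range'_iff.mpr ⟨hn, by omega⟩)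
  obtain ⟨k, hk, hσk⟩ := List.getElem_of_mem hmemn
  have hval : ∀ i (hi : i < σ.length), 1 ≤ σ[i] ∧ σ[i] ≤ n := by
    intro i hi
    have : σ[i] ∈ range' 1 n := h.mem_iff.mp (List.getElem_mem hi)
    rw [mem_range'_iff] at this
    omega
  have huniq : ∀ i (hi : i < σ.length), i ≠ k → σ[i] < n := by
    intro i hi hik
    rcases Nat.lt_or_ge σ[i] n with h' | h'
    · exact h'
    · exfalso
      apply hik
      apply (hnd.getElem_inj_iff (hi := hi) (hj := hk)).mp
      rw [hσk]
      exact le_antisymm (hval i hi).2 h'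
  -- getD versions
  have hvalD : ∀ i, i < n → 1 ≤ σ.getD i 0 ∧ σ.getD i 0 ≤ n := by
    intro i hi
    rw [List.getD_eq_getElem _ _ (by omega)]
    exact hval i (by omega)
  have hσkD : σ.getD k 0 = n := by
    rw [List.getD_eq_getElem _ _ hk]; exact hσk
  have huniqD : ∀ i, i < n → i ≠ k → σ.getD i 0 < n := by
    intro i hi hik
    rw [List.getD_eq_getElem _ _ (by omega)]
    exact huniq i (by omega) hik
  have hkn : k < n := by omega
  have hlen' : (σ.map (f n)).length = n := by simp [hlen]
  have dmap : ∀ i, i < n → (σ.map (f n)).getD i 0 = f n (σ.getD i 0) := by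
    intro i hi
    rw [List.getD_eq_getElem _ _ (by omega : i < (σ.map (f n)).length),
        List.getD_eq_getElem _ _ (by omega : i < σ.length), List.getElem_map]
  have key : vtSyndrome (σ.map (f n)) + (if k < n - 1 then k + 1 else 0) = vtSyndrome σ + k := by
    have e1 : (if k < n - 1 then k + 1 else 0)
        = ∑ i ∈ Finset.range (n - 1), (if i = k then i + 1 else 0) := by
      rw [Finset.sum_ite_eq' (Finset.range (n - 1)) k (fun i => i + 1)]
      simp [Finset.mem_range]
    have e2 : k = ∑ i ∈ Finset.range (n - 1), (if i + 1 = k then i + 1 else 0) := by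
      rcases k with _ | j
      · simp
      · have hj : ∀ i : ℕ, (i + 1 = j + 1) ↔ (i = j) := by omega
        simp only [hj]
        rw [Finset.sum_ite_eq' (Finset.range (n - 1)) j (fun i => i + 1)]
        rw [if_pos (Finset.mem_range.mpr (by omega))]
    unfold vtSyndrome
    rw [hlen', hlen, e1]
    conv_rhs => rw [e2]
    rw [← Finset.sum_add_distrib, ← Finset.sum_add_distrib]
    apply Finset.sum_congr rfl
    intro i hi
    rw [Finset.mem_range] at hi
    rw [dmap i (by omega), dmap (i + 1) (by omega)]
    have hx := hvalD i (by omega)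
    have hy := hvalD (i + 1) (by omega)
    by_cases hik : i = k
    · have h1 : σ.getD i 0 = n := by rw [hik, hσkD]
      have h2 : σ.getD (i + 1) 0 < n := huniqD (i + 1) (by omega) (by omega)
      rw [h1, f_n, f_lt n _ h2]
      split_ifs <;> omega
    · by_cases hik' : i + 1 = k
      · have h1 : σ.getD (i + 1) 0 = n := by rw [hik', hσkD]
        have h2 : σ.getD i 0 < n := huniqD i (by omega) hik
        rw [h1, f_n, f_lt n _ h2]
        split_ifs <;> omega
      · have h1 : σ.getD i 0 < n := huniqD i (by omega) hik
        have h2 : σ.getD (i + 1) 0 < n := huniqD (i + 1) (by omega) hik'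
        rw [f_lt n _ h1, f_lt n _ h2]
        split_ifs <;> omega
  rcases Nat.lt_or_ge k (n - 1) with hkc | hkc
  · rw [if_pos hkc] at key
    have h2 : vtSyndrome σ + (n - 1) = vtSyndrome (σ.map (f n)) + n := by omega
    rw [h2, Nat.add_mod_right]
  · rw [if_neg (by omega)] at key
    have h2 : vtSyndrome σ + (n - 1) = vtSyndrome (σ.map (f n)) := by omega
    rw [h2]

end VTaux


/-- The symmetric group `S_n` is partitioned into `n` classes by the VT-syndrome of
the inversion vector: for each `a ∈ {0,…,n-1}`, the class
`C_a = {σ : VT-syndrome(inv σ) ≡ a (mod n)}` has cardinality `(n-1)!`. -/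
theorem vt_cosets_of_Sn_have_card_factorial (n a : ℕ) (hn : 1 ≤ n) (ha : a < n) :
    Set.ncard {σ : List ℕ | σ.Perm (List.range' 1 n) ∧ vtSyndrome σ % n = a} =
      (n - 1).factorial := by
  classical
  set T : Finset (List ℕ) := (List.range' 1 n).permutations.toFinset with hT
  have hmemT : ∀ σ, σ ∈ T ↔ σ.Perm (List.range' 1 n) := by
    intro σ
    simp only [hT, List.mem_toFinset, List.mem_permutations]
  have hcardT : T.card = Nat.factorial n := by
    rw [hT, List.toFinset_card_of_nodup (List.nodup_permutations _ (List.nodup_range' (s := 1) (n := n))),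
        List.length_permutations, List.length_range']
  set C : ℕ → Finset (List ℕ) := fun b => T.filter (fun σ => vtSyndrome σ % n = b) with hC
  have hmemC : ∀ b σ, σ ∈ C b ↔ (σ.Perm (List.range' 1 n) ∧ vtSyndrome σ % n = b) := by
    intro b σ
    simp only [hC, Finset.mem_filter, hmemT]
  have gfσ : ∀ σ : List ℕ, σ.Perm (List.range' 1 n) →
      (σ.map (VTaux.f n)).map (VTaux.g n) = σ := by
    intro σ hσ
    rw [List.map_map]
    have : σ.map (VTaux.g n ∘ VTaux.f n) = σ.map id := by
      apply List.map_congr_left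
      intro v hv
      have hv' := VTaux.mem_range'_iff.mp (hσ.mem_iff.mp hv)
      exact VTaux.gf n v hn hv'.1 (by omega)
    rw [this, List.map_id]
  have fgτ : ∀ τ : List ℕ, τ.Perm (List.range' 1 n) →
      (τ.map (VTaux.g n)).map (VTaux.f n) = τ := by
    intro τ hτ
    rw [List.map_map]
    have : τ.map (VTaux.f n ∘ VTaux.g n) = τ.map id := by
      apply List.map_congr_left
      intro v hv
      have hv' := VTaux.mem_range'_iff.mp (hτ.mem_iff.mp hv)
      exact VTaux.fg n v hn hv'.1 (by omega)
    rw [this, List.map_id]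
  have step : ∀ b, b < n → (C b).card = (C ((b + (n - 1)) % n)).card := by
    intro b hb
    refine Finset.card_bij' (fun σ _ => σ.map (VTaux.f n)) (fun τ _ => τ.map (VTaux.g n))
      ?_ ?_ ?_ ?_
    · intro σ hσ
      rw [hmemC] at hσ ⊢
      obtain ⟨hp, hs⟩ := hσ
      refine ⟨(hp.map _).trans (VTaux.map_f_perm n hn), ?_⟩
      rw [VTaux.syndrome_shift n hn σ hp, ← Nat.mod_add_mod, hs]
    · intro τ hτ
      rw [hmemC] at hτ ⊢
      obtain ⟨hp, hs⟩ := hτ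
      have hpg : (τ.map (VTaux.g n)).Perm (List.range' 1 n) :=
        (hp.map _).trans (VTaux.map_g_perm n hn)
      refine ⟨hpg, ?_⟩
      have h2 := VTaux.syndrome_shift n hn (τ.map (VTaux.g n)) hpg
      rw [fgτ τ hp, hs] at h2
      set s := vtSyndrome (τ.map (VTaux.g n)) % n with hsdef
      have hs' : s < n := Nat.mod_lt _ (by omega)
      have h3 : (s + (n - 1)) % n = (b + (n - 1)) % n := by
        rw [hsdef, Nat.mod_add_mod]
        exact h2.symm
      have h4 : (s + (n - 1) + 1) % n = (b + (n - 1) + 1) % n := by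
        rw [← Nat.mod_add_mod, h3, Nat.mod_add_mod]
      rw [show s + (n - 1) + 1 = s + n by omega, show b + (n - 1) + 1 = b + n by omega,
          Nat.add_mod_right, Nat.add_mod_right, Nat.mod_eq_of_lt hs', Nat.mod_eq_of_lt hb] at h4
      exact h4
    · intro σ hσ
      rw [hmemC] at hσ
      exact gfσ σ hσ.1
    · intro τ hτ
      rw [hmemC] at hτ
      exact fgτ τ hτ.1
  have iter : ∀ (b j : ℕ), (C (b % n)).card = (C ((b + j * (n - 1)) % n)).card := by
    intro b j
    induction j with
    | zero => simp
    | succ m ih =>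
      rw [ih, step ((b + m * (n - 1)) % n) (Nat.mod_lt _ (by omega)), Nat.mod_add_mod]
      congr 2
      ring
  have hall : ∀ b, b < n → (C b).card = (C 0).card := by
    intro b hb
    have h1 := iter b b
    rw [Nat.mod_eq_of_lt hb] at h1
    rw [h1]
    congr 1
    have h2 : b + b * (n - 1) = b * n := by
      have h3 : n - 1 + 1 = n := by omega
      calc b + b * (n - 1) = b * ((n - 1) + 1) := by ring
        _ = b * n := by rw [h3]
    rw [h2, Nat.mul_mod_left]
  have hsum : T.card = ∑ b ∈ Finset.range n, (C b).card := by
    rw [hC]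
    exact Finset.card_eq_sum_card_fiberwise
      (f := fun σ => vtSyndrome σ % n)
      (fun σ _ => Finset.mem_range.mpr (Nat.mod_lt _ (by omega)))
  have hconst : ∑ b ∈ Finset.range n, (C b).card = n * (C 0).card := by
    rw [Finset.sum_congr rfl (fun b hb => hall b (Finset.mem_range.mp hb)),
        Finset.sum_const, Finset.card_range, smul_eq_mul]
  have hfact : Nat.factorial n = n * Nat.factorial (n - 1) := by
    obtain ⟨m, rfl⟩ : ∃ m, n = m + 1 := ⟨n - 1, by omega⟩
    simp [Nat.factorial_succ]
  have hC0 : (C 0).card = Nat.factorial (n - 1) := by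
    apply Nat.eq_of_mul_eq_mul_left (show 0 < n by omega)
    rw [← hconst, ← hsum, hcardT, hfact]
  have hset : {σ : List ℕ | σ.Perm (List.range' 1 n) ∧ vtSyndrome σ % n = a} = ↑(C a) := by
    ext σ
    rw [Set.mem_setOf_eq, Finset.mem_coe, hmemC]
  rw [hset, Set.ncard_coe_finset, hall a ha, hC0]
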